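/- Let G be a connected graph on n > 3d vertices with minimum degree at least d. Suppose there exist vertices u, v with dist(u,v) = 3 such that B_4(u) ≠ V(G), B_4(v) ≠ V(G), and B_2(u) ∪ B_2(v) = V(G). Then the degree sum of G^4 is at least (7/3)d·n. -/

import Mathlib

/-- The `k`-th power of a simple graph `G`: two distinct vertices are adjacent
iff their distance in `G` is at most `k`. -/
def SimpleGraph.power {V : Type*} (G : SimpleGraph V) (k : ℕ) : SimpleGraph V where
  Adj u v := u ≠ v ∧ G.dist u v ≤ k
  symm := ⟨fun u v h => ⟨h.1.symm, by rw [SimpleGraph.dist_comm]; exact h.2⟩⟩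
  loopless := ⟨fun v h => h.1 rfl⟩

private lemma dist_getVert_le_aux {V : Type*} (G : SimpleGraph V) (hconn : G.Connected)
    {a b : V} (p : G.Walk a b) (i : ℕ) : G.dist a (p.getVert i) ≤ i := by
  induction i with
  | zero => simp [SimpleGraph.Walk.getVert_zero]
  | succ n ih =>
    rcases lt_or_ge n p.length with h | h
    · have hadj : G.Adj (p.getVert n) (p.getVert (n + 1)) := p.adj_getVert_succ h
      have h1 : G.dist (p.getVert n) (p.getVert (n + 1)) = 1 :=
        SimpleGraph.dist_eq_one_iff_adj.mpr hadj
      have tri := hconn.dist_triangle (u := a) (w := p.getVert (n + 1)) (v := p.getVert n)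
      omega
    · have e1 : p.getVert (n + 1) = b := p.getVert_of_length_le (by omega)
      have e2 : p.getVert n = b := p.getVert_of_length_le h
      rw [e1, ← e2]
      omega

private lemma exists_dist_split {V : Type*} (G : SimpleGraph V) (hconn : G.Connected)
    {a b : V} {i j : ℕ} (hab : G.dist a b = i + j) :
    ∃ z : V, G.dist a z = i ∧ G.dist z b = j := by
  obtain ⟨p, hp⟩ := hconn.exists_walk_length_eq_dist a b
  have hlen : p.length = i + j := by rw [hp, hab]
  have h1 : G.dist a (p.getVert i) ≤ i := dist_getVert_le_aux G hconn p i
  have hrev : p.reverse.getVert j = p.getVert i := by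
    rw [SimpleGraph.Walk.getVert_reverse]
    congr 1
    omega
  have h2 : G.dist b (p.getVert i) ≤ j := by
    rw [← hrev]; exact dist_getVert_le_aux G hconn p.reverse j
  have tri := hconn.dist_triangle (u := a) (w := b) (v := p.getVert i)
  have hc : G.dist (p.getVert i) b = G.dist b (p.getVert i) := SimpleGraph.dist_comm
  exact ⟨p.getVert i, by omega, by omega⟩

private lemma sum_ite_mem_ncard {V : Type*} [Fintype V] (S : Set V)
    [inst : DecidablePred (· ∈ S)] (c : ℝ) :
    (∑ w : V, if w ∈ S then c else 0) = (S.ncard : ℝ) * c := by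
  have h1 : (∑ w : V, if w ∈ S then c else 0) = ∑ w ∈ Finset.univ.filter (· ∈ S), c :=
    (Finset.sum_filter _ _).symm
  have h2 : Finset.univ.filter (· ∈ S) = S.toFinset := by
    ext t; simp [Set.mem_toFinset]
  rw [h1, h2, Finset.sum_const, nsmul_eq_mul, Set.ncard_eq_toFinset_card']

private lemma key_ineq (d c b g h qq pp r : ℝ) (hd : 0 ≤ d) (hc : 0 ≤ c)
    (hg : 0 ≤ g) (hh : 0 ≤ h) (hcb : c ≤ b)
    (H1 : c + d + 1 ≤ qq) (H2 : b + d + 1 ≤ pp) (H3 : d + 1 ≤ r + c)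
    (H5 : 2 * d ≤ g + h + r) :
    7 / 3 * d * (qq + pp + r) ≤
      qq * (qq + r - 1) + pp * (pp + r - 1) + r * (qq + pp + r - 1) + h * c + g * b := by
  have hs : 0 ≤ qq - (c + d + 1) := by linarith
  have ht : 0 ≤ pp - (c + d + 1) := by linarith
  have he : 0 ≤ r + c - (d + 1) := by linarith
  have cross1 : 0 ≤ g * (b - c) := mul_nonneg hg (by linarith)
  have cross2 : 0 ≤ c * (g + h + r - 2 * d) := mul_nonneg hc (by linarith)
  nlinarith [mul_nonneg hs hs, mul_nonneg ht ht, mul_nonneg he he,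
    mul_nonneg hs he, mul_nonneg ht he, mul_nonneg hc he,
    mul_nonneg hd hs, mul_nonneg hd ht, mul_nonneg hd he, mul_nonneg hd hc,
    cross1, cross2]

set_option maxHeartbeats 1600000 in
theorem avg_degree_fourth_power_special {V : Type*} [Fintype V] (G : SimpleGraph V) (d : ℕ)
    (hconn : G.Connected) (hmin : ∀ v : V, d ≤ (G.neighborSet v).ncard)
    (hn : 3 * d < Fintype.card V) (u v : V) (huv : G.dist u v = 3)
    (hu4 : {w : V | G.dist w u ≤ 4} ≠ Set.univ)
    (hv4 : {w : V | G.dist w v ≤ 4} ≠ Set.univ)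
    (hcov : {w : V | G.dist w u ≤ 2} ∪ {w : V | G.dist w v ≤ 2} = Set.univ) :
    (7 / 3 * d * Fintype.card V : ℝ) ≤ ∑ w : V, (((G.power 4).neighborSet w).ncard : ℝ) := by
  classical
  have tri : ∀ a b c : V, G.dist a c ≤ G.dist a b + G.dist b c := fun a b c =>
    hconn.dist_triangle
  have dcomm : ∀ a b : V, G.dist a b = G.dist b a := fun a b => SimpleGraph.dist_comm
  set SA : Set V := {w | G.dist w u ≤ 2} with hSAdef
  set SB : Set V := {w | G.dist w v ≤ 2} with hSBdef
  have memSA : ∀ w : V, w ∈ SA ↔ G.dist w u ≤ 2 := fun w => Iff.rfl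
  have memSB : ∀ w : V, w ∈ SB ↔ G.dist w v ≤ 2 := fun w => Iff.rfl
  have hcov' : ∀ w : V, w ∈ SA ∨ w ∈ SB := by
    intro w
    have : w ∈ SA ∪ SB := by rw [hcov]; trivial
    exact this
  set SR : Set V := SA ∩ SB with hSRdef
  set SQ : Set V := SA \ SB with hSQdef
  set SP : Set V := SB \ SA with hSPdef
  set SQ3 : Set V := {w | w ∈ SQ ∧ G.dist w v ≤ 3} with hSQ3def
  set SP3 : Set V := {w | w ∈ SP ∧ G.dist w u ≤ 3} with hSP3def
  set SPl : Set V := {w | w ∈ SP ∧ G.dist w v ≤ 1} with hSPldef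
  set SQm : Set V := {w | w ∈ SQ ∧ G.dist w u ≤ 1} with hSQmdef
  set SR12 : Set V := {w | w ∈ SR ∧ G.dist w u ≤ 1} with hSR12def
  set SR21 : Set V := {w | w ∈ SR ∧ G.dist w v ≤ 1} with hSR21def
  set nA := SA.ncard with hnAdef
  set nB := SB.ncard with hnBdef
  set nR := SR.ncard with hnRdef
  set nQ := SQ.ncard with hnQdef
  set nP := SP.ncard with hnPdef
  set q3 := SQ3.ncard with hq3def
  set p3 := SP3.ncard with hp3def
  set pl := SPl.ncard with hpldef
  set qm := SQm.ncard with hqmdef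
  set r12 := SR12.ncard with hr12def
  set r21 := SR21.ncard with hr21def
  set N := Fintype.card V with hNdef
  -- cardinal identities
  have hNuniv : (Set.univ : Set V).ncard = N := by
    rw [Set.ncard_univ, Nat.card_eq_fintype_card]
  have hunion : SA ∪ SB = Set.univ := hcov
  have hRN : nR + N = nA + nB := by
    have := Set.ncard_inter_add_ncard_union SA SB
    rw [hunion, hNuniv] at this
    exact this
  have hQA : nQ + nR = nA := by
    have hsub : SR ⊆ SA := Set.inter_subset_left
    have hdiff : SA \ SR = SQ := by
      ext t
      simp only [hSRdef, hSQdef, Set.mem_diff, Set.mem_inter_iff]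
      tauto
    have := Set.ncard_diff_add_ncard_of_subset hsub
    rw [hdiff] at this
    exact this
  have hPB : nP + nR = nB := by
    have hsub : SR ⊆ SB := Set.inter_subset_right
    have hdiff : SB \ SR = SP := by
      ext t
      simp only [hSRdef, hSPdef, Set.mem_diff, Set.mem_inter_iff]
      tauto
    have := Set.ncard_diff_add_ncard_of_subset hsub
    rw [hdiff] at this
    exact this
  have hNsum : N = nQ + nP + nR := by omega
  -- closed neighborhood cardinality
  have hclosed : ∀ z : V, (insert z (G.neighborSet z)).ncard = (G.neighborSet z).ncard + 1 := by
    intro z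
    exact Set.ncard_insert_of_notMem (G.notMem_neighborSet_self)
  have hmemclosed : ∀ z t : V, t ∈ insert z (G.neighborSet z) → G.dist z t ≤ 1 := by
    intro z t ht
    rcases Set.mem_insert_iff.mp ht with h | h
    · rw [h, SimpleGraph.dist_self]; omega
    · have : G.Adj z t := h
      exact le_of_eq (SimpleGraph.dist_eq_one_iff_adj.mpr this)
  -- p1, p2 on a geodesic from u to v
  obtain ⟨p1, hp1u, hp1v⟩ := exists_dist_split G hconn (i := 1) (j := 2) (by omega : G.dist u v = 1 + 2)
  obtain ⟨p2, hp2u, hp2v⟩ := exists_dist_split G hconn (i := 2) (j := 1) (by omega : G.dist u v = 2 + 1)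
  -- x far from u, y far from v
  obtain ⟨x, hx⟩ := (Set.ne_univ_iff_exists_notMem _).mp hu4
  obtain ⟨y, hy⟩ := (Set.ne_univ_iff_exists_notMem _).mp hv4
  have hxu : 5 ≤ G.dist x u := by
    have hx' : ¬ G.dist x u ≤ 4 := hx
    omega
  have hyv : 5 ≤ G.dist y v := by
    have hy' : ¬ G.dist y v ≤ 4 := hy
    omega
  have hxA : x ∉ SA := by
    intro h; rw [memSA] at h; omega
  have hyB : y ∉ SB := by
    intro h; rw [memSB] at h; omega
  have hxB : x ∈ SB := (hcov' x).resolve_left hxA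
  have hyA : y ∈ SA := (hcov' y).resolve_right hyB
  -- constraint f3 : d + 1 ≤ nR + q3  (via N[p1])
  have f3 : d + 1 ≤ nR + q3 := by
    have hsub : insert p1 (G.neighborSet p1) ⊆ SR ∪ SQ3 := by
      intro t ht
      have h1 : G.dist p1 t ≤ 1 := hmemclosed p1 t ht
      have htu : G.dist t u ≤ 2 := by
        have := tri t p1 u
        have h2 : G.dist t p1 = G.dist p1 t := dcomm t p1
        have h3 : G.dist p1 u = G.dist u p1 := dcomm p1 u
        omega
      have htv : G.dist t v ≤ 3 := by
        have := tri t p1 v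
        have h2 : G.dist t p1 = G.dist p1 t := dcomm t p1
        omega
      have htA : t ∈ SA := htu
      by_cases htB : t ∈ SB
      · exact Or.inl ⟨htA, htB⟩
      · exact Or.inr ⟨⟨htA, htB⟩, htv⟩
    have hcard : (insert p1 (G.neighborSet p1)).ncard ≤ nR + q3 :=
      le_trans (Set.ncard_le_ncard hsub) (Set.ncard_union_le _ _)
    have := hmin p1
    rw [hclosed p1] at hcard
    omega
  -- constraint f4 : d + 1 ≤ nR + p3  (via N[p2])
  have f4 : d + 1 ≤ nR + p3 := by
    have hsub : insert p2 (G.neighborSet p2) ⊆ SR ∪ SP3 := by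
      intro t ht
      have h1 : G.dist p2 t ≤ 1 := hmemclosed p2 t ht
      have htv : G.dist t v ≤ 2 := by
        have := tri t p2 v
        have h2 : G.dist t p2 = G.dist p2 t := dcomm t p2
        omega
      have htu : G.dist t u ≤ 3 := by
        have := tri t p2 u
        have h2 : G.dist t p2 = G.dist p2 t := dcomm t p2
        have h3 : G.dist p2 u = G.dist u p2 := dcomm p2 u
        omega
      have htB : t ∈ SB := htv
      by_cases htA : t ∈ SA
      · exact Or.inl ⟨htA, htB⟩
      · exact Or.inr ⟨⟨htB, htA⟩, htu⟩
    have hcard : (insert p2 (G.neighborSet p2)).ncard ≤ nR + p3 :=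
      le_trans (Set.ncard_le_ncard hsub) (Set.ncard_union_le _ _)
    have := hmin p2
    rw [hclosed p2] at hcard
    omega
  -- constraint f5 : q3 + (d+1) ≤ nQ  (via N[y])
  have f5 : q3 + (d + 1) ≤ nQ := by
    have hsub : insert y (G.neighborSet y) ⊆ SQ \ SQ3 := by
      intro t ht
      have h1 : G.dist y t ≤ 1 := hmemclosed y t ht
      have htv : 4 ≤ G.dist t v := by
        have := tri y t v
        omega
      have htB : t ∉ SB := by
        intro h; rw [memSB] at h; omega
      have htA : t ∈ SA := (hcov' t).resolve_right htB
      constructor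
      · exact ⟨htA, htB⟩
      · intro h
        have := h.2
        omega
    have hd1 : d + 1 ≤ (SQ \ SQ3).ncard := by
      have := hmin y
      have hc := Set.ncard_le_ncard hsub (Set.toFinite _)
      rw [hclosed y] at hc
      omega
    have hQ3sub : SQ3 ⊆ SQ := fun t ht => ht.1
    have := Set.ncard_diff_add_ncard_of_subset hQ3sub
    omega
  -- constraint f6 : p3 + (d+1) ≤ nP  (via N[x])
  have f6 : p3 + (d + 1) ≤ nP := by
    have hsub : insert x (G.neighborSet x) ⊆ SP \ SP3 := by
      intro t ht
      have h1 : G.dist x t ≤ 1 := hmemclosed x t ht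
      have htu : 4 ≤ G.dist t u := by
        have := tri x t u
        omega
      have htA : t ∉ SA := by
        intro h; rw [memSA] at h; omega
      have htB : t ∈ SB := (hcov' t).resolve_left htA
      constructor
      · exact ⟨htB, htA⟩
      · intro h
        have := h.2
        omega
    have hd1 : d + 1 ≤ (SP \ SP3).ncard := by
      have := hmin x
      have hc := Set.ncard_le_ncard hsub (Set.toFinite _)
      rw [hclosed x] at hc
      omega
    have hP3sub : SP3 ⊆ SP := fun t ht => ht.1
    have := Set.ncard_diff_add_ncard_of_subset hP3sub
    omega
  -- constraint f7 : d ≤ r12 + qm  (via N(u))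
  have f7 : d ≤ r12 + qm := by
    have hsub : G.neighborSet u ⊆ SR12 ∪ SQm := by
      intro t ht
      have hadj : G.Adj u t := ht
      have h1 : G.dist t u = 1 := SimpleGraph.dist_eq_one_iff_adj.mpr hadj.symm
      have htA : t ∈ SA := by rw [memSA]; omega
      by_cases htB : t ∈ SB
      · exact Or.inl ⟨⟨htA, htB⟩, by omega⟩
      · exact Or.inr ⟨⟨htA, htB⟩, by omega⟩
    have hcard : (G.neighborSet u).ncard ≤ r12 + qm :=
      le_trans (Set.ncard_le_ncard hsub) (Set.ncard_union_le _ _)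
    have := hmin u
    omega
  -- constraint f8 : d ≤ r21 + pl  (via N(v))
  have f8 : d ≤ r21 + pl := by
    have hsub : G.neighborSet v ⊆ SR21 ∪ SPl := by
      intro t ht
      have hadj : G.Adj v t := ht
      have h1 : G.dist t v = 1 := SimpleGraph.dist_eq_one_iff_adj.mpr hadj.symm
      have htB : t ∈ SB := by rw [memSB]; omega
      by_cases htA : t ∈ SA
      · exact Or.inl ⟨⟨htA, htB⟩, by omega⟩
      · exact Or.inr ⟨⟨htB, htA⟩, by omega⟩
    have hcard : (G.neighborSet v).ncard ≤ r21 + pl :=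
      le_trans (Set.ncard_le_ncard hsub) (Set.ncard_union_le _ _)
    have := hmin v
    omega
  -- constraint f9 : r12 + r21 ≤ nR
  have f9 : r12 + r21 ≤ nR := by
    have hdisj : Disjoint SR12 SR21 := by
      rw [Set.disjoint_left]
      intro t ht1 ht2
      have h1 := ht1.2
      have h2 := ht2.2
      have := tri u t v
      have hc : G.dist u t = G.dist t u := dcomm u t
      omega
    have hsub : SR12 ∪ SR21 ⊆ SR := by
      intro t ht
      rcases ht with h | h
      · exact h.1
      · exact h.1
    have h1 := Set.ncard_union_eq hdisj (Set.toFinite _) (Set.toFinite _)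
    have h2 := Set.ncard_le_ncard hsub (Set.toFinite _)
    omega
  -- per-vertex lower bounds
  have hNpos : 1 ≤ N := by omega
  have nbhd_mem : ∀ w t : V, w ≠ t → G.dist w t ≤ 4 → t ∈ (G.power 4).neighborSet w := by
    intro w t h1 h2
    exact ⟨h1, h2⟩
  -- bound for vertices in SR
  have boundR : ∀ w ∈ SR, N ≤ ((G.power 4).neighborSet w).ncard + 1 := by
    intro w hw
    have hsub : Set.univ \ {w} ⊆ (G.power 4).neighborSet w := by
      intro t ht
      have htne : t ≠ w := ht.2
      apply nbhd_mem w t (Ne.symm htne)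
      rcases hcov' t with htA | htB
      · have h1 : G.dist w u ≤ 2 := hw.1
        have h2 : G.dist t u ≤ 2 := htA
        have h3 := tri w u t
        have h4 : G.dist u t = G.dist t u := dcomm u t
        omega
      · have h1 : G.dist w v ≤ 2 := hw.2
        have h2 : G.dist t v ≤ 2 := htB
        have h3 := tri w v t
        have h4 : G.dist v t = G.dist t v := dcomm v t
        omega
    have h1 : (Set.univ \ {w}).ncard + 1 = N := by
      have := Set.ncard_diff_singleton_add_one (Set.mem_univ w) (Set.toFinite _)
      rw [hNuniv] at this
      exact this
    have h2 := Set.ncard_le_ncard hsub (Set.toFinite _)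
    omega
  -- bound for vertices in SQ
  have boundQ : ∀ w ∈ SQ, nA ≤ ((G.power 4).neighborSet w).ncard + 1 := by
    intro w hw
    have hsub : SA \ {w} ⊆ (G.power 4).neighborSet w := by
      intro t ht
      apply nbhd_mem w t (Ne.symm ht.2)
      have h1 : G.dist w u ≤ 2 := hw.1
      have h2 : G.dist t u ≤ 2 := ht.1
      have h3 := tri w u t
      have h4 : G.dist u t = G.dist t u := dcomm u t
      omega
    have h1 : (SA \ {w}).ncard + 1 = nA := Set.ncard_diff_singleton_add_one hw.1 (Set.toFinite _)
    have h2 := Set.ncard_le_ncard hsub (Set.toFinite _)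
    omega
  have boundQ3 : ∀ w ∈ SQ3, nA + pl ≤ ((G.power 4).neighborSet w).ncard + 1 := by
    intro w hw
    have hwQ : w ∈ SQ := hw.1
    have hw3 : G.dist w v ≤ 3 := hw.2
    have hsub : (SA \ {w}) ∪ SPl ⊆ (G.power 4).neighborSet w := by
      intro t ht
      rcases ht with ht | ht
      · apply nbhd_mem w t (Ne.symm ht.2)
        have h1 : G.dist w u ≤ 2 := hwQ.1
        have h2 : G.dist t u ≤ 2 := ht.1
        have h3 := tri w u t
        have h4 : G.dist u t = G.dist t u := dcomm u t
        omega
      · have htP : t ∈ SP := ht.1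
        have htv : G.dist t v ≤ 1 := ht.2
        have hne : w ≠ t := by
          intro h
          exact htP.2 (h ▸ hwQ.1)
        apply nbhd_mem w t hne
        have h3 := tri w v t
        have h4 : G.dist v t = G.dist t v := dcomm v t
        omega
    have hdisj : Disjoint (SA \ {w}) SPl := by
      rw [Set.disjoint_left]
      intro t ht1 ht2
      exact ht2.1.2 ht1.1
    have h1 : (SA \ {w}).ncard + 1 = nA := Set.ncard_diff_singleton_add_one hwQ.1 (Set.toFinite _)
    have h2 := Set.ncard_union_eq hdisj (Set.toFinite _) (Set.toFinite _)
    have h3 := Set.ncard_le_ncard hsub (Set.toFinite _)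
    omega
  -- bound for vertices in SP
  have boundP : ∀ w ∈ SP, nB ≤ ((G.power 4).neighborSet w).ncard + 1 := by
    intro w hw
    have hsub : SB \ {w} ⊆ (G.power 4).neighborSet w := by
      intro t ht
      apply nbhd_mem w t (Ne.symm ht.2)
      have h1 : G.dist w v ≤ 2 := hw.1
      have h2 : G.dist t v ≤ 2 := ht.1
      have h3 := tri w v t
      have h4 : G.dist v t = G.dist t v := dcomm v t
      omega
    have h1 : (SB \ {w}).ncard + 1 = nB := Set.ncard_diff_singleton_add_one hw.1 (Set.toFinite _)
    have h2 := Set.ncard_le_ncard hsub (Set.toFinite _)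
    omega
  have boundP3 : ∀ w ∈ SP3, nB + qm ≤ ((G.power 4).neighborSet w).ncard + 1 := by
    intro w hw
    have hwP : w ∈ SP := hw.1
    have hw3 : G.dist w u ≤ 3 := hw.2
    have hsub : (SB \ {w}) ∪ SQm ⊆ (G.power 4).neighborSet w := by
      intro t ht
      rcases ht with ht | ht
      · apply nbhd_mem w t (Ne.symm ht.2)
        have h1 : G.dist w v ≤ 2 := hwP.1
        have h2 : G.dist t v ≤ 2 := ht.1
        have h3 := tri w v t
        have h4 : G.dist v t = G.dist t v := dcomm v t
        omega
      · have htQ : t ∈ SQ := ht.1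
        have htu : G.dist t u ≤ 1 := ht.2
        have hne : w ≠ t := by
          intro h
          exact htQ.2 (h ▸ hwP.1)
        apply nbhd_mem w t hne
        have h3 := tri w u t
        have h4 : G.dist u t = G.dist t u := dcomm u t
        omega
    have hdisj : Disjoint (SB \ {w}) SQm := by
      rw [Set.disjoint_left]
      intro t ht1 ht2
      exact ht2.1.2 ht1.1
    have h1 : (SB \ {w}).ncard + 1 = nB := Set.ncard_diff_singleton_add_one hwP.1 (Set.toFinite _)
    have h2 := Set.ncard_union_eq hdisj (Set.toFinite _) (Set.toFinite _)
    have h3 := Set.ncard_le_ncard hsub (Set.toFinite _)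
    omega
  -- the pointwise real-valued lower bound
  set f : V → ℝ := fun w => (((G.power 4).neighborSet w).ncard : ℝ) with hfdef
  set g : V → ℝ := fun w =>
    (if w ∈ SA then (nA : ℝ) - 1 else 0) + (if w ∈ SB then (nB : ℝ) - 1 else 0)
    - (if w ∈ SR then (nR : ℝ) - 1 else 0)
    + (if w ∈ SQ3 then (pl : ℝ) else 0) + (if w ∈ SP3 then (qm : ℝ) else 0) with hgdef
  have hpoint : ∀ w : V, g w ≤ f w := by
    intro w
    by_cases hwA : w ∈ SA
    · by_cases hwB : w ∈ SB
      · -- w ∈ SR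
        have hwR : w ∈ SR := ⟨hwA, hwB⟩
        have hwQ3 : w ∉ SQ3 := fun h => h.1.2 hwB
        have hwP3 : w ∉ SP3 := fun h => h.1.2 hwA
        simp only [hgdef, if_pos hwA, if_pos hwB, if_pos hwR, if_neg hwQ3, if_neg hwP3]
        have hb := boundR w hwR
        have hcast : ((N : ℕ) : ℝ) ≤ f w + 1 := by
          simp only [hfdef]
          exact_mod_cast hb
        have : (nR : ℝ) + N = nA + nB := by exact_mod_cast hRN
        linarith
      · -- w ∈ SQ
        have hwQ : w ∈ SQ := ⟨hwA, hwB⟩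
        have hwR : w ∉ SR := fun h => hwB h.2
        have hwP3 : w ∉ SP3 := fun h => h.1.2 hwA
        simp only [hgdef, if_pos hwA, if_neg hwB, if_neg hwR, if_neg hwP3]
        by_cases hw3 : w ∈ SQ3
        · simp only [if_pos hw3]
          have hb := boundQ3 w hw3
          have hcast : (nA : ℝ) + pl ≤ f w + 1 := by
            simp only [hfdef]
            exact_mod_cast hb
          linarith
        · simp only [if_neg hw3]
          have hb := boundQ w hwQ
          have hcast : (nA : ℝ) ≤ f w + 1 := by
            simp only [hfdef]
            exact_mod_cast hb
          linarith
    · -- w ∈ SP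
      have hwB : w ∈ SB := (hcov' w).resolve_left hwA
      have hwP : w ∈ SP := ⟨hwB, hwA⟩
      have hwR : w ∉ SR := fun h => hwA h.1
      have hwQ3 : w ∉ SQ3 := fun h => hwA h.1.1
      simp only [hgdef, if_neg hwA, if_pos hwB, if_neg hwR, if_neg hwQ3]
      by_cases hw3 : w ∈ SP3
      · simp only [if_pos hw3]
        have hb := boundP3 w hw3
        have hcast : (nB : ℝ) + qm ≤ f w + 1 := by
          simp only [hfdef]
          exact_mod_cast hb
        linarith
      · simp only [if_neg hw3]
        have hb := boundP w hwP
        have hcast : (nB : ℝ) ≤ f w + 1 := by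
          simp only [hfdef]
          exact_mod_cast hb
        linarith
  -- summation
  have hsumle : ∑ w : V, g w ≤ ∑ w : V, f w :=
    Finset.sum_le_sum (fun w _ => hpoint w)
  have hsumg : ∑ w : V, g w =
      (nA : ℝ) * ((nA : ℝ) - 1) + (nB : ℝ) * ((nB : ℝ) - 1) - (nR : ℝ) * ((nR : ℝ) - 1)
      + (q3 : ℝ) * (pl : ℝ) + (p3 : ℝ) * (qm : ℝ) := by
    simp only [hgdef]
    rw [Finset.sum_add_distrib, Finset.sum_add_distrib, Finset.sum_sub_distrib,
      Finset.sum_add_distrib]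
    rw [sum_ite_mem_ncard SA ((nA : ℝ) - 1), sum_ite_mem_ncard SB ((nB : ℝ) - 1),
      sum_ite_mem_ncard SR ((nR : ℝ) - 1), sum_ite_mem_ncard SQ3 ((pl : ℝ)),
      sum_ite_mem_ncard SP3 ((qm : ℝ))]
  -- final arithmetic
  have hkey : (7 / 3 * d * N : ℝ) ≤
      (nA : ℝ) * ((nA : ℝ) - 1) + (nB : ℝ) * ((nB : ℝ) - 1) - (nR : ℝ) * ((nR : ℝ) - 1)
      + (q3 : ℝ) * (pl : ℝ) + (p3 : ℝ) * (qm : ℝ) := by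
    have e1 : (nA : ℝ) = (nQ : ℝ) + nR := by exact_mod_cast hQA.symm
    have e2 : (nB : ℝ) = (nP : ℝ) + nR := by exact_mod_cast hPB.symm
    have e3 : (N : ℝ) = (nQ : ℝ) + nP + nR := by exact_mod_cast hNsum
    have hdnn : (0 : ℝ) ≤ d := Nat.cast_nonneg d
    have hq3nn : (0 : ℝ) ≤ q3 := Nat.cast_nonneg q3
    have hp3nn : (0 : ℝ) ≤ p3 := Nat.cast_nonneg p3
    have hqmnn : (0 : ℝ) ≤ qm := Nat.cast_nonneg qm
    have hplnn : (0 : ℝ) ≤ pl := Nat.cast_nonneg pl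
    have H5 : (2 : ℝ) * d ≤ (qm : ℝ) + pl + nR := by
      have : 2 * d ≤ qm + pl + nR := by omega
      exact_mod_cast this
    rcases le_total q3 p3 with hcb | hcb
    · have H1 : (q3 : ℝ) + d + 1 ≤ (nQ : ℝ) := by
        have : q3 + d + 1 ≤ nQ := by omega
        exact_mod_cast this
      have H2 : (p3 : ℝ) + d + 1 ≤ (nP : ℝ) := by
        have : p3 + d + 1 ≤ nP := by omega
        exact_mod_cast this
      have H3 : (d : ℝ) + 1 ≤ (nR : ℝ) + q3 := by
        have : d + 1 ≤ nR + q3 := by omega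
        exact_mod_cast this
      have hcb' : (q3 : ℝ) ≤ p3 := by exact_mod_cast hcb
      have := key_ineq (d : ℝ) (q3 : ℝ) (p3 : ℝ) (qm : ℝ) (pl : ℝ) (nQ : ℝ) (nP : ℝ) (nR : ℝ)
        hdnn hq3nn hqmnn hplnn hcb' H1 H2 H3 (by linarith)
      rw [e1, e2, e3]
      nlinarith [this]
    · have H1 : (p3 : ℝ) + d + 1 ≤ (nP : ℝ) := by
        have : p3 + d + 1 ≤ nP := by omega
        exact_mod_cast this
      have H2 : (q3 : ℝ) + d + 1 ≤ (nQ : ℝ) := by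
        have : q3 + d + 1 ≤ nQ := by omega
        exact_mod_cast this
      have H3 : (d : ℝ) + 1 ≤ (nR : ℝ) + p3 := by
        have : d + 1 ≤ nR + p3 := by omega
        exact_mod_cast this
      have hcb' : (p3 : ℝ) ≤ q3 := by exact_mod_cast hcb
      have := key_ineq (d : ℝ) (p3 : ℝ) (q3 : ℝ) (pl : ℝ) (qm : ℝ) (nP : ℝ) (nQ : ℝ) (nR : ℝ)
        hdnn hp3nn hplnn hqmnn hcb' H1 H2 H3 (by linarith)
      rw [e1, e2, e3]
      nlinarith [this]
  calc (7 / 3 * d * Fintype.card V : ℝ) ≤ ∑ w : V, g w := by rw [hsumg]; exact hkey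
    _ ≤ ∑ w : V, f w := hsumle
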